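/- For an ideal I on ℕ, the following are equivalent: (1) I is a Baire ideal for every Polish space; (2) I is a Baire ideal for the Cantor space 2^ℕ; (3) for every monotone f : 2^{<ℕ} → P(I) such that each f(s) is hereditary and ⋃_{t ⊒ s} f(t) = I for all s, there exists σ ∈ 2^ℕ with ⋃_{k} f(σ|_k) = I. -/

import Mathlib

open scoped ENNReal Cardinal

/-- An ideal on ℕ containing all finite sets, closed under subsets and finite
unions, with `ℕ ∉ I`. -/
def IsIdealOn (I : Set (Set ℕ)) : Prop :=
  Set.univ ∉ I ∧ (∀ A ∈ I, ∀ B, B ⊆ A → B ∈ I) ∧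
    (∀ A ∈ I, ∀ B ∈ I, A ∪ B ∈ I) ∧ (∀ A : Set ℕ, A.Finite → A ∈ I)

/-- `β` is a basis of the ideal `I`: a cofinal (under inclusion) subfamily. -/
def IsIdealBasis (I β : Set (Set ℕ)) : Prop := β ⊆ I ∧ ∀ A ∈ I, ∃ B ∈ β, A ⊆ B

/-- `I` is a Baire ideal for the topological space `X`: for every monotone family of
nowhere dense subsets of `X` indexed by `I`, the union is not all of `X`. -/
def IsBaireIdealFor (I : Set (Set ℕ)) (X : Type*) [TopologicalSpace X] : Prop :=
  ∀ f : Set ℕ → Set X, (∀ A ∈ I, IsNowhereDense (f A)) →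
    (∀ A ∈ I, ∀ B ∈ I, A ⊆ B → f A ⊆ f B) → (⋃ A ∈ I, f A) ≠ Set.univ

namespace Stmt7


variable {X : Type} [MetricSpace X]

open Classical in
/-- One step of the fusion machine. State: (center, radius, pending count). -/
noncomputable def bstep (u : ℕ → X) : X × ℝ × ℕ → Bool → X × ℝ × ℕ
  | (c, r, z), false => (c, r, z + 1)
  | (c, r, z), true =>
      if Metric.closedBall (u z.unpair.1) ((2:ℝ)⁻¹ ^ z.unpair.2) ⊆ Metric.ball c r
          ∧ (2:ℝ)⁻¹ ^ z.unpair.2 ≤ r / 2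
      then (u z.unpair.1, (2:ℝ)⁻¹ ^ z.unpair.2, 0) else (c, r, 0)

noncomputable def bstate (u : ℕ → X) (s : List Bool) : X × ℝ × ℕ :=
  s.foldl (bstep u) (u 0, 1, 0)

lemma bstep_cases (u : ℕ → X) (p : X × ℝ × ℕ) (b : Bool) :
    ((bstep u p b).1 = p.1 ∧ (bstep u p b).2.1 = p.2.1) ∨
    (0 < (bstep u p b).2.1 ∧ (bstep u p b).2.1 ≤ p.2.1 / 2 ∧
      Metric.closedBall (bstep u p b).1 (bstep u p b).2.1 ⊆ Metric.ball p.1 p.2.1) := by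
  obtain ⟨c, r, z⟩ := p
  cases b
  · left; exact ⟨rfl, rfl⟩
  · simp only [bstep]
    classical
    split
    · next h =>
      right
      refine ⟨by positivity, h.2, ?_⟩
      simpa using h.1
    · left; exact ⟨rfl, rfl⟩

lemma bstep_pos (u : ℕ → X) (p : X × ℝ × ℕ) (b : Bool) (hp : 0 < p.2.1) :
    0 < (bstep u p b).2.1 := by
  rcases bstep_cases u p b with ⟨_, h⟩ | ⟨h, _⟩
  · rwa [h]
  · exact h

lemma foldl_pos (u : ℕ → X) (s : List Bool) (p : X × ℝ × ℕ) (hp : 0 < p.2.1) :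
    0 < (s.foldl (bstep u) p).2.1 := by
  induction s generalizing p with
  | nil => exact hp
  | cons b s ih => exact ih _ (bstep_pos u p b hp)

lemma bstep_ball (u : ℕ → X) (p : X × ℝ × ℕ) (b : Bool) :
    Metric.ball (bstep u p b).1 (bstep u p b).2.1 ⊆ Metric.ball p.1 p.2.1 := by
  rcases bstep_cases u p b with ⟨h1, h2⟩ | ⟨_, _, h⟩
  · rw [h1, h2]
  · exact Metric.ball_subset_closedBall.trans h

lemma foldl_ball (u : ℕ → X) (s : List Bool) (p : X × ℝ × ℕ) :
    Metric.ball (s.foldl (bstep u) p).1 (s.foldl (bstep u) p).2.1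
      ⊆ Metric.ball p.1 p.2.1 := by
  induction s generalizing p with
  | nil => exact le_refl _
  | cons b s ih => exact (ih (bstep u p b)).trans (bstep_ball u p b)

lemma bstate_pos (u : ℕ → X) (s : List Bool) : 0 < (bstate u s).2.1 :=
  foldl_pos u s _ one_pos

lemma bstate_prefix (u : ℕ → X) {s t : List Bool} (h : s <+: t) :
    Metric.ball (bstate u t).1 (bstate u t).2.1
      ⊆ Metric.ball (bstate u s).1 (bstate u s).2.1 := by
  obtain ⟨v, rfl⟩ := h
  rw [bstate, List.foldl_append]
  exact foldl_ball u v _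

lemma foldl_replicate (u : ℕ → X) (k : ℕ) (c : X) (r : ℝ) (z : ℕ) :
    (List.replicate k false).foldl (bstep u) (c, r, z) = (c, r, z + k) := by
  induction k generalizing z with
  | zero => rfl
  | succ k ih =>
    rw [List.replicate_succ, List.foldl_cons]
    show (List.replicate k false).foldl (bstep u) (c, r, z + 1) = _
    rw [ih]
    congr 2
    omega


/-- The tree property implies Baire for every Polish space. -/
lemma tree_to_baire (I : Set (Set ℕ)) (hI : IsIdealOn I)
    (htree : ∀ f : List Bool → Set (Set ℕ),
        (∀ s t : List Bool, s <+: t → f s ⊆ f t) →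
        (∀ s : List Bool, f s ⊆ I) →
        (∀ s : List Bool, ∀ A ∈ f s, ∀ B : Set ℕ, B ⊆ A → B ∈ f s) →
        (∀ s : List Bool, (⋃ t ∈ {t : List Bool | s <+: t}, f t) = I) →
        ∃ σ : ℕ → Bool, (⋃ k : ℕ, f (List.ofFn fun i : Fin k => σ i)) = I)
    (X : Type) [TopologicalSpace X] [PolishSpace X] [Nonempty X] :
    IsBaireIdealFor I X := by
  letI := TopologicalSpace.upgradeIsCompletelyMetrizable X
  intro F hND hmono hcov
  set u := TopologicalSpace.denseSeq X with hu
  set f : List Bool → Set (Set ℕ) := fun s =>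
    {A | A ∈ I ∧ Metric.ball (bstate u s).1 (bstate u s).2.1 ∩ closure (F A) = ∅} with hf
  have h1 : ∀ s t : List Bool, s <+: t → f s ⊆ f t := by
    rintro s t hst A ⟨hAI, hA⟩
    refine ⟨hAI, Set.subset_empty_iff.1 ?_⟩
    rw [← hA]
    exact Set.inter_subset_inter_left _ (bstate_prefix u hst)
  have h2 : ∀ s, f s ⊆ I := fun s A hA => hA.1
  have h3 : ∀ s : List Bool, ∀ A ∈ f s, ∀ B : Set ℕ, B ⊆ A → B ∈ f s := by
    rintro s A ⟨hAI, hA⟩ B hBA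
    have hBI := hI.2.1 A hAI B hBA
    refine ⟨hBI, Set.subset_empty_iff.1 ?_⟩
    rw [← hA]
    exact Set.inter_subset_inter_right _ (closure_mono (hmono B hBI A hAI hBA))
  have h4 : ∀ s : List Bool, (⋃ t ∈ {t : List Bool | s <+: t}, f t) = I := by
    intro s
    apply Set.Subset.antisymm
    · exact Set.iUnion₂_subset fun t _ => h2 t
    · intro A hA
      set c : X := (bstate u s).1 with hc
      set r : ℝ := (bstate u s).2.1 with hrdef
      set z : ℕ := (bstate u s).2.2 with hz
      have hr : 0 < r := bstate_pos u s
      have hnotsub : ¬ Metric.ball c r ⊆ closure (F A) := by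
        intro h
        have h2' : Metric.ball c r ⊆ interior (closure (F A)) :=
          Metric.isOpen_ball.subset_interior_iff.2 h
        rw [hND A hA] at h2'
        exact h2' (Metric.mem_ball_self hr)
      obtain ⟨x₀, hx₀b, hx₀c⟩ := Set.not_subset.1 hnotsub
      have hopen : IsOpen (Metric.ball c r ∩ (closure (F A))ᶜ) :=
        Metric.isOpen_ball.inter isClosed_closure.isOpen_compl
      obtain ⟨ε, hε, hballsub⟩ := Metric.isOpen_iff.1 hopen x₀ ⟨hx₀b, hx₀c⟩
      obtain ⟨i, hi⟩ := (TopologicalSpace.denseRange_denseSeq X).exists_dist_lt x₀ (half_pos hε)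
      obtain ⟨m₁, hm₁⟩ := exists_pow_lt_of_lt_one
        (lt_min (half_pos hε) (half_pos hr)) (by norm_num : (2:ℝ)⁻¹ < 1)
      set m : ℕ := max m₁ z with hm
      have hρ : (2:ℝ)⁻¹ ^ m ≤ (2:ℝ)⁻¹ ^ m₁ :=
        pow_le_pow_of_le_one (by norm_num) (by norm_num) (le_max_left _ _)
      have hρε : (2:ℝ)⁻¹ ^ m ≤ ε / 2 :=
        hρ.trans (hm₁.le.trans (min_le_left _ _))
      have hρr : (2:ℝ)⁻¹ ^ m ≤ r / 2 :=
        hρ.trans (hm₁.le.trans (min_le_right _ _))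
      set n : ℕ := Nat.pair i m with hn
      have hnz : z ≤ n := (le_max_right m₁ z).trans (Nat.right_le_pair i m)
      have hcbsub : Metric.closedBall (u i) ((2:ℝ)⁻¹ ^ m) ⊆
          Metric.ball c r ∩ (closure (F A))ᶜ := by
        refine subset_trans ?_ hballsub
        intro y hy
        rw [Metric.mem_closedBall] at hy
        rw [Metric.mem_ball]
        calc dist y x₀ ≤ dist y (u i) + dist (u i) x₀ := dist_triangle _ _ _
          _ < ε / 2 + ε / 2 := by
              rw [dist_comm (u i) x₀]
              exact add_lt_add_of_le_of_lt (hy.trans hρε) hi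
          _ = ε := by ring
      set t : List Bool := s ++ (List.replicate (n - z) false ++ [true]) with ht
      have hstate : bstate u t = (u i, (2:ℝ)⁻¹ ^ m, 0) := by
        rw [ht, bstate, List.foldl_append, List.foldl_append]
        have h0 : List.foldl (bstep u) (u 0, 1, 0) s = bstate u s := rfl
        have h1' : bstate u s = (c, r, z) := rfl
        rw [h0, h1', foldl_replicate]
        have hzn : z + (n - z) = n := by omega
        rw [hzn]
        show bstep u (c, r, n) true = _
        simp only [bstep]
        rw [Nat.unpair_pair]
        rw [if_pos ⟨hcbsub.trans (Set.inter_subset_left), hρr⟩]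
      refine Set.mem_biUnion (show s <+: t from ⟨_, rfl⟩) ?_
      refine ⟨hA, ?_⟩
      rw [hstate]
      apply Set.subset_empty_iff.1
      rintro x ⟨hx1, hx2⟩
      exact (hcbsub (Metric.ball_subset_closedBall hx1)).2 hx2
  obtain ⟨σ, hσ⟩ := htree f h1 h2 h3 h4
  set S : ℕ → X × ℝ × ℕ := fun k => bstate u (List.ofFn fun i : Fin k => σ i) with hS
  set cc : ℕ → X := fun k => (S k).1 with hcc
  set rr : ℕ → ℝ := fun k => (S k).2.1 with hrr
  have hstep : ∀ k, S (k + 1) = bstep u (S k) (σ k) := by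
    intro k
    show bstate u (List.ofFn fun i : Fin (k+1) => σ i) = _
    rw [List.ofFn_succ' (fun i : Fin (k+1) => σ (i : ℕ))]
    rw [List.concat_eq_append, bstate, List.foldl_append]
    simp only [Fin.coe_castSucc, Fin.val_last, List.foldl_cons, List.foldl_nil]
    rfl
  have hpos : ∀ k, 0 < rr k := fun k => bstate_pos u _
  have hsubsucc : ∀ k, Metric.ball (cc (k+1)) (rr (k+1)) ⊆ Metric.ball (cc k) (rr k) := by
    intro k
    have := bstep_ball u (S k) (σ k)
    rw [← hstep k] at this
    exact this
  have hmono' : ∀ k l, k ≤ l → Metric.ball (cc l) (rr l) ⊆ Metric.ball (cc k) (rr k) := by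
    intro k l h
    induction l, h using Nat.le_induction with
    | base => exact subset_rfl
    | succ l hl ih => exact (hsubsucc l).trans ih
  have hdich : ∀ k, (cc (k+1) = cc k ∧ rr (k+1) = rr k) ∨
      (Metric.closedBall (cc (k+1)) (rr (k+1)) ⊆ Metric.ball (cc k) (rr k) ∧
        rr (k+1) ≤ rr k / 2) := by
    intro k
    have h := bstep_cases u (S k) (σ k)
    rw [← hstep k] at h
    rcases h with ⟨ha, hb⟩ | ⟨h0, hhalf, hsb⟩
    · exact Or.inl ⟨ha, hb⟩
    · exact Or.inr ⟨hsb, hhalf⟩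
  have hrrsucc : ∀ k, rr (k+1) ≤ rr k := by
    intro k
    rcases hdich k with ⟨-, h⟩ | ⟨-, h⟩
    · exact h.le
    · exact h.trans (half_le_self (hpos k).le)
  have hrant : Antitone rr := antitone_nat_of_succ_le hrrsucc
  have hx : ∃ x : X, ∀ k, x ∈ Metric.ball (cc k) (rr k) := by
    by_cases hshr : ∀ K, ∃ k, K ≤ k ∧
        (Metric.closedBall (cc (k+1)) (rr (k+1)) ⊆ Metric.ball (cc k) (rr k) ∧
          rr (k+1) ≤ rr k / 2)
    · have hr0 : rr 0 = 1 := by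
        show (bstate u (List.ofFn fun i : Fin 0 => σ i)).2.1 = 1
        rw [List.ofFn_zero]
        rfl
      have hsmall : ∀ j : ℕ, ∃ k, rr k ≤ (2:ℝ)⁻¹ ^ j := by
        intro j
        induction j with
        | zero => exact ⟨0, by rw [hr0]; norm_num⟩
        | succ j ih =>
          obtain ⟨k, hk⟩ := ih
          obtain ⟨k', hkk', -, hhalf⟩ := hshr k
          refine ⟨k' + 1, ?_⟩
          have h1' : rr k' ≤ rr k := hrant hkk'
          have : (2:ℝ)⁻¹ ^ (j+1) = (2:ℝ)⁻¹ ^ j / 2 := by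
            rw [pow_succ]; ring
          rw [this]
          linarith
      have hcauchy : CauchySeq cc := by
        rw [Metric.cauchySeq_iff']
        intro ε hε
        obtain ⟨j, hj⟩ := exists_pow_lt_of_lt_one hε (by norm_num : (2:ℝ)⁻¹ < 1)
        obtain ⟨K, hK⟩ := hsmall j
        refine ⟨K, fun nn hn => ?_⟩
        have hmem : cc nn ∈ Metric.ball (cc K) (rr K) :=
          hmono' K nn hn (Metric.mem_ball_self (hpos nn))
        rw [Metric.mem_ball] at hmem
        linarith
      obtain ⟨x, hx⟩ := cauchySeq_tendsto_of_complete hcauchy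
      refine ⟨x, fun k => ?_⟩
      obtain ⟨j, hjk, hsub', -⟩ := hshr k
      have hxcb : x ∈ Metric.closedBall (cc (j+1)) (rr (j+1)) := by
        refine Metric.isClosed_closedBall.mem_of_tendsto hx ?_
        filter_upwards [Filter.eventually_ge_atTop (j+1)] with l hl
        exact Metric.ball_subset_closedBall
          (hmono' (j+1) l hl (Metric.mem_ball_self (hpos l)))
      exact hmono' k j hjk (hsub' hxcb)
    · push_neg at hshr
      obtain ⟨K, hK⟩ := hshr
      have hconst : ∀ k, K ≤ k → cc k = cc K ∧ rr k = rr K := by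
        intro k hk
        induction k, hk using Nat.le_induction with
        | base => exact ⟨rfl, rfl⟩
        | succ k hk ih =>
          rcases hdich k with ⟨h1', h2'⟩ | ⟨h1', h2'⟩
          · exact ⟨h1'.trans ih.1, h2'.trans ih.2⟩
          · exact absurd h2' (not_le.2 (hK k hk h1'))
      refine ⟨cc K, fun k => ?_⟩
      rcases le_total k K with h | h
      · exact hmono' k K h (Metric.mem_ball_self (hpos K))
      · obtain ⟨hc', hr'⟩ := hconst k h
        rw [hc', hr']
        exact Metric.mem_ball_self (hpos K)
  obtain ⟨x, hxall⟩ := hx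
  have hxuniv : x ∈ ⋃ A ∈ I, F A := by rw [hcov]; trivial
  obtain ⟨A, hAI, hxA⟩ := Set.mem_iUnion₂.1 hxuniv
  have hAmem : A ∈ ⋃ k : ℕ, f (List.ofFn fun i : Fin k => σ i) := by rw [hσ]; exact hAI
  obtain ⟨k, hk⟩ := Set.mem_iUnion.1 hAmem
  obtain ⟨-, hdisj⟩ := hk
  have hmem : x ∈ Metric.ball (cc k) (rr k) ∩ closure (F A) :=
    ⟨hxall k, subset_closure hxA⟩
  exact Set.eq_empty_iff_forall_notMem.1 hdisj x hmem

/-- Baire for the Cantor space implies the tree property. -/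
lemma baire_to_tree (I : Set (Set ℕ)) (hB : IsBaireIdealFor I (ℕ → Bool)) :
    ∀ f : List Bool → Set (Set ℕ),
      (∀ s t : List Bool, s <+: t → f s ⊆ f t) →
      (∀ s : List Bool, f s ⊆ I) →
      (∀ s : List Bool, ∀ A ∈ f s, ∀ B : Set ℕ, B ⊆ A → B ∈ f s) →
      (∀ s : List Bool, (⋃ t ∈ {t : List Bool | s <+: t}, f t) = I) →
      ∃ σ : ℕ → Bool, (⋃ k : ℕ, f (List.ofFn fun i : Fin k => σ i)) = I := by
  intro f h1 h2 h3 h4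
  by_contra hno
  push_neg at hno
  set G : Set ℕ → Set (ℕ → Bool) := fun A =>
    {σ | ∀ k : ℕ, A ∉ f (List.ofFn fun i : Fin k => σ i)} with hG
  have hcov : (⋃ A ∈ I, G A) = Set.univ := by
    rw [Set.eq_univ_iff_forall]
    intro σ
    have hsub : (⋃ k : ℕ, f (List.ofFn fun i : Fin k => σ i)) ⊆ I :=
      Set.iUnion_subset fun k => h2 _
    obtain ⟨A, hAI, hAn⟩ := Set.exists_of_ssubset (hsub.ssubset_of_ne (hno σ))
    refine Set.mem_biUnion hAI ?_
    intro k hk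
    exact hAn (Set.mem_iUnion.2 ⟨k, hk⟩)
  have hofFn : ∀ (σ τ : ℕ → Bool) (k : ℕ), τ ∈ PiNat.cylinder σ k →
      (List.ofFn fun i : Fin k => τ i) = List.ofFn fun i : Fin k => σ i := by
    intro σ τ k hτ
    exact congrArg List.ofFn (funext fun i => PiNat.mem_cylinder_iff.1 hτ i.1 i.2)
  have hclosed : ∀ A, IsClosed (G A) := by
    intro A
    rw [← isOpen_compl_iff, isOpen_iff_mem_nhds]
    intro σ hσ
    simp only [hG, Set.mem_compl_iff, Set.mem_setOf_eq, not_forall, not_not] at hσ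
    obtain ⟨k, hk⟩ := hσ
    refine Filter.mem_of_superset
      ((PiNat.isOpen_cylinder _ σ k).mem_nhds (PiNat.self_mem_cylinder σ k)) ?_
    intro τ hτ
    simp only [hG, Set.mem_compl_iff, Set.mem_setOf_eq, not_forall, not_not]
    exact ⟨k, by rw [hofFn σ τ k hτ]; exact hk⟩
  have hND : ∀ A ∈ I, IsNowhereDense (G A) := by
    intro A hA
    show interior (closure (G A)) = ∅
    rw [(hclosed A).closure_eq, Set.eq_empty_iff_forall_notMem]
    intro σ hσ
    obtain ⟨v, ⟨x, k, rfl⟩, hσv, hvsub⟩ :=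
      (PiNat.isTopologicalBasis_cylinders (fun _ : ℕ => Bool)).exists_subset_of_mem_open hσ
        isOpen_interior
    have hcyl : PiNat.cylinder σ k = PiNat.cylinder x k := PiNat.mem_cylinder_iff_eq.1 hσv
    have hAI : A ∈ ⋃ t ∈ {t | (List.ofFn fun i : Fin k => σ i) <+: t}, f t := by
      rw [h4]; exact hA
    obtain ⟨t, hpref, hAf⟩ := Set.mem_iUnion₂.1 hAI
    set τ : ℕ → Bool := fun j => if h : j < t.length then t.get ⟨j, h⟩ else false with hτdef
    have hlen : k ≤ t.length := by
      have := hpref.length_le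
      simpa using this
    have hτt : (List.ofFn fun i : Fin t.length => τ i) = t := by
      have heq : (fun i : Fin t.length => τ i) = t.get := funext fun i => dif_pos i.isLt
      rw [heq]
      exact List.ofFn_get t
    have hτcyl : τ ∈ PiNat.cylinder σ k := by
      rw [PiNat.mem_cylinder_iff]
      intro i hi
      have hit : i < t.length := lt_of_lt_of_le hi hlen
      have h5 : τ i = t[i] := dif_pos hit
      have h6 : t[i] = σ i := by
        have hik : i < (List.ofFn fun j : Fin k => σ j).length := by simpa using hi
        rw [← hpref.getElem hik, List.getElem_ofFn]
      rw [h5, h6]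
    have hτG : τ ∈ G A := interior_subset (hvsub (hcyl ▸ hτcyl))
    exact hτG t.length (by rw [hτt]; exact hAf)
  have hmono : ∀ A ∈ I, ∀ B ∈ I, A ⊆ B → G A ⊆ G B := by
    intro A hA B hB hAB σ hσ k hBk
    exact hσ k (h3 _ B hBk A hAB)
  exact hB G hND hmono hcov

end Stmt7

/-- For an ideal `I` on ℕ the following are equivalent: (1) `I` is a Baire ideal for
every Polish space; (2) `I` is a Baire ideal for the Cantor space `2^ℕ`; (3) the tree
property over `2^{<ℕ}` holds. -/
theorem stmt_7 (I : Set (Set ℕ)) (hI : IsIdealOn I) :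
    ((∀ (X : Type) [TopologicalSpace X] [PolishSpace X] [Nonempty X],
        IsBaireIdealFor I X) ↔ IsBaireIdealFor I (ℕ → Bool)) ∧
    (IsBaireIdealFor I (ℕ → Bool) ↔
      ∀ f : List Bool → Set (Set ℕ),
        (∀ s t : List Bool, s <+: t → f s ⊆ f t) →
        (∀ s : List Bool, f s ⊆ I) →
        (∀ s : List Bool, ∀ A ∈ f s, ∀ B : Set ℕ, B ⊆ A → B ∈ f s) →
        (∀ s : List Bool, (⋃ t ∈ {t : List Bool | s <+: t}, f t) = I) →
        ∃ σ : ℕ → Bool, (⋃ k : ℕ, f (List.ofFn fun i : Fin k => σ i)) = I) := by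
  haveI : PolishSpace (ℕ → Bool) := {}
  refine ⟨⟨fun h => h (ℕ → Bool), fun h X _ _ _ => ?_⟩,
    ⟨Stmt7.baire_to_tree I, fun htree => Stmt7.tree_to_baire I hI htree (ℕ → Bool)⟩⟩
  exact Stmt7.tree_to_baire I hI (Stmt7.baire_to_tree I h) X
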